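/- Cyclic convolution property (H7): let g and v be vectors of length N with entries in K, with FFHTs G and V respectively, and let w be their cyclic convolution, w_i := ∑_{m=0}^{N−1} g_m·v_{(i−m) mod N}. Then the FFHT W of w satisfies, for every k, W_k = (1/2)·(G_k·V_k + G_k·V_{k'} + G_{k'}·V_k − G_{k'}·V_{k'}), where k' := (N−k) mod N. -/

import Mathlib

open scoped BigOperators

/-- The finite field cosine: `cos_k(∠α^i) = (α^{ik} + α^{-ik})/2`,
where `α^{-ik}` denotes `(α⁻¹)^{ik}`. -/
noncomputable def fcos {K : Type*} [Field K] (α : Kˣ) (k i : ℤ) : K :=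
  (((α ^ (i * k) : Kˣ) : K) + ((α⁻¹ ^ (i * k) : Kˣ) : K)) / 2

/-- The finite field sine: `sin_k(∠α^i) = (α^{ik} - α^{-ik})/(2j)`. -/
noncomputable def fsin {K : Type*} [Field K] (α : Kˣ) (j : K) (k i : ℤ) : K :=
  (((α ^ (i * k) : Kˣ) : K) - ((α⁻¹ ^ (i * k) : Kˣ) : K)) / (2 * j)

/-- The finite field `cas` function: `cas_k(∠α^i) = cos_k(∠α^i) + sin_k(∠α^i)`. -/
noncomputable def fcas {K : Type*} [Field K] (α : Kˣ) (j : K) (k i : ℤ) : K :=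
  fcos α k i + fsin α j k i

/-- The finite field Hartley transform of a vector `v` indexed by `ZMod N`:
`V_k = ∑_{i=0}^{N-1} v_i · cas_k(∠α^i)`. -/
noncomputable def ffht {K : Type*} [Field K] (α : Kˣ) (j : K) {N : ℕ} [NeZero N]
    (v : ZMod N → K) (k : ZMod N) : K :=
  ∑ i : ZMod N, v i * fcas α j (k.val : ℤ) (i.val : ℤ)

noncomputable def expE {K : Type*} [Field K] (α : Kˣ) {N : ℕ} [NeZero N] (t : ZMod N) : K :=
  ((α ^ (t.val : ℤ) : Kˣ) : K)

lemma expE_cast {K : Type*} [Field K] (α : Kˣ) {N : ℕ} [NeZero N] (hα : orderOf α = N)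
    (m : ℤ) : ((α ^ m : Kˣ) : K) = expE α ((m : ZMod N)) := by
  unfold expE
  congr 1
  have hdvd : (N : ℤ) ∣ (((m : ZMod N).val : ℤ) - m) := by
    apply (ZMod.intCast_zmod_eq_zero_iff_dvd _ N).mp
    push_cast
    rw [ZMod.natCast_val, ZMod.cast_id]
    ring
  have h1 : α ^ ((((m : ZMod N).val : ℤ)) - m) = 1 := by
    apply orderOf_dvd_iff_zpow_eq_one.mp
    rw [hα]; exact hdvd
  calc α ^ m = α ^ (m + ((((m : ZMod N).val : ℤ)) - m)) := by
        rw [zpow_add, h1, mul_one]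
    _ = α ^ (((m : ZMod N).val : ℤ)) := by ring_nf

lemma expE_add {K : Type*} [Field K] (α : Kˣ) {N : ℕ} [NeZero N] (hα : orderOf α = N)
    (a b : ZMod N) : expE α (a + b) = expE α a * expE α b := by
  have h : ((((a.val : ℤ) + (b.val : ℤ)) : ℤ) : ZMod N) = a + b := by
    push_cast
    rw [ZMod.natCast_val, ZMod.natCast_val, ZMod.cast_id, ZMod.cast_id]
  calc expE α (a + b) = ((α ^ ((a.val : ℤ) + (b.val : ℤ)) : Kˣ) : K) := by
        rw [expE_cast α hα, h]
    _ = expE α a * expE α b := by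
        rw [zpow_add]; push_cast [expE]; ring

lemma fcas_expand {K : Type*} [Field K] (α : Kˣ) {N : ℕ} [NeZero N] (hα : orderOf α = N)
    (j : K) (hj : j ^ 2 = -1) (h2 : (2 : K) ≠ 0) (a b : ZMod N) :
    fcas α j (a.val : ℤ) (b.val : ℤ)
      = (1 - j) / 2 * expE α (b * a) + (1 + j) / 2 * expE α (-(b * a)) := by
  have hjne : j ≠ 0 := by
    intro h; rw [h] at hj; simp at hj
  have hmm : (((b.val : ℤ) * (a.val : ℤ) : ℤ) : ZMod N) = b * a := by
    push_cast
    rw [ZMod.natCast_val, ZMod.natCast_val, ZMod.cast_id, ZMod.cast_id]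
  have h1 : ((α ^ ((b.val : ℤ) * (a.val : ℤ)) : Kˣ) : K) = expE α (b * a) := by
    rw [expE_cast α hα, hmm]
  have h2' : ((α⁻¹ ^ ((b.val : ℤ) * (a.val : ℤ)) : Kˣ) : K) = expE α (-(b * a)) := by
    rw [inv_zpow, ← zpow_neg, expE_cast α hα]
    congr 1
    rw [Int.cast_neg, hmm]
  have hjinv : (2 * j)⁻¹ = -j / 2 := by
    apply inv_eq_of_mul_eq_one_right
    field_simp
    linear_combination (-1 : K) * hj
  unfold fcas fcos fsin
  rw [h1, h2', div_eq_mul_inv _ (2 * j), hjinv]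
  field_simp
  ring

lemma ffht_eq {K : Type*} [Field K] (α : Kˣ) {N : ℕ} [NeZero N] (hα : orderOf α = N)
    (j : K) (hj : j ^ 2 = -1) (h2 : (2 : K) ≠ 0) (u : ZMod N → K) (k : ZMod N) :
    ffht α j u k = (1 - j) / 2 * (∑ i : ZMod N, u i * expE α (i * k))
      + (1 + j) / 2 * (∑ i : ZMod N, u i * expE α (-(i * k))) := by
  unfold ffht
  rw [Finset.mul_sum, Finset.mul_sum, ← Finset.sum_add_distrib]
  refine Finset.sum_congr rfl fun i _ => ?_
  rw [fcas_expand α hα j hj h2 k i]; ring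

lemma ffht_neg_eq {K : Type*} [Field K] (α : Kˣ) {N : ℕ} [NeZero N] (hα : orderOf α = N)
    (j : K) (hj : j ^ 2 = -1) (h2 : (2 : K) ≠ 0) (u : ZMod N → K) (k : ZMod N) :
    ffht α j u (-k) = (1 - j) / 2 * (∑ i : ZMod N, u i * expE α (-(i * k)))
      + (1 + j) / 2 * (∑ i : ZMod N, u i * expE α (i * k)) := by
  rw [ffht_eq α hα j hj h2 u (-k)]
  simp only [mul_neg, neg_neg]


/-- H7, cyclic convolution: if `w = g ⋆ v` is the cyclic convolution,
then `W_k = (1/2)·(G_k V_k + G_k V_{-k} + G_{-k} V_k − G_{-k} V_{-k})`. -/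
theorem ffht_cyclic_convolution (p : ℕ) (hp : p.Prime) (hpodd : Odd p)
    (K : Type*) [Field K] [CharP K p] (j : K) (hj : j ^ 2 = -1)
    (α : Kˣ) (N : ℕ) [NeZero N] (hα : orderOf α = N)
    (g G : ZMod N → K) (hG : ∀ k, G k = ffht α j g k)
    (v V : ZMod N → K) (hV : ∀ k, V k = ffht α j v k)
    (w W : ZMod N → K) (hw : ∀ i : ZMod N, w i = ∑ m : ZMod N, g m * v (i - m))
    (hW : ∀ k, W k = ffht α j w k) (k : ZMod N) :
    W k = (1 / 2 : K) *
      (G k * V k + G k * V (-k) + G (-k) * V k - G (-k) * V (-k)) := by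
  have hp2 : p ≠ 2 := by
    rintro rfl
    exact (by decide : ¬ Odd 2) hpodd
  have h2 : (2 : K) ≠ 0 := by
    have : ((2 : ℕ) : K) ≠ 0 := by
      rw [Ne, CharP.cast_eq_zero_iff K p]
      intro hd
      exact hp2 ((Nat.prime_dvd_prime_iff_eq hp Nat.prime_two).mp hd)
    simpa using this
  have key : ∀ F : ZMod N → K, (∀ a b, F (a + b) = F a * F b) →
      (∑ i : ZMod N, w i * F i)
        = (∑ m : ZMod N, g m * F m) * (∑ n : ZMod N, v n * F n) := by
    intro F hF
    rw [Finset.sum_mul_sum]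
    simp_rw [hw, Finset.sum_mul]
    rw [Finset.sum_comm]
    refine Finset.sum_congr rfl fun m _ => ?_
    have he := Fintype.sum_equiv (Equiv.addRight m)
      (fun n => g m * v (n + m - m) * F (n + m))
      (fun i => g m * v (i - m) * F i) (fun n => rfl)
    rw [← he]
    refine Finset.sum_congr rfl fun n _ => ?_
    simp only [add_sub_cancel_right]
    rw [hF]
    ring
  have keyP : (∑ i : ZMod N, w i * expE α (i * k))
      = (∑ m : ZMod N, g m * expE α (m * k)) * (∑ n : ZMod N, v n * expE α (n * k)) := by
    exact key (fun t => expE α (t * k)) (fun a b => by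
      show expE α ((a + b) * k) = expE α (a * k) * expE α (b * k)
      rw [add_mul]; exact expE_add α hα _ _)
  have keyQ : (∑ i : ZMod N, w i * expE α (-(i * k)))
      = (∑ m : ZMod N, g m * expE α (-(m * k)))
        * (∑ n : ZMod N, v n * expE α (-(n * k))) := by
    exact key (fun t => expE α (-(t * k))) (fun a b => by
      show expE α (-((a + b) * k)) = expE α (-(a * k)) * expE α (-(b * k))
      rw [add_mul, neg_add]; exact expE_add α hα _ _)
  rw [hW, hG, hG, hV, hV, ffht_eq α hα j hj h2 w k, ffht_eq α hα j hj h2 g k,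
    ffht_eq α hα j hj h2 v k, ffht_neg_eq α hα j hj h2 g k, ffht_neg_eq α hα j hj h2 v k,
    keyP, keyQ]
  set Pg := ∑ m : ZMod N, g m * expE α (m * k) with hPg
  set Qg := ∑ m : ZMod N, g m * expE α (-(m * k)) with hQg
  set Pv := ∑ n : ZMod N, v n * expE α (n * k) with hPv
  set Qv := ∑ n : ZMod N, v n * expE α (-(n * k)) with hQv
  clear_value Pg Qg Pv Qv
  field_simp
  linear_combination (2 * (Pg - Qg) * (Pv - Qv)) * hj
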